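/- Let K be a field with nonzero weights for distinct labels i, j, k. Suppose the two conditions β_ij = (γ_ij/γ_ik - γ_kj)·b_ij(S)c_jk(T)/(c_ik(S)c_ji(T)) and β_ij = (τ_ik·γ_ij/γ_ik - γ_kj·τ_ij/τ_kj)·b_ij(S)c_kj(T)/(c_ki(S)c_ij(T)) both hold, and suppose β_ij = 0. Then γ_ij/(γ_ik γ_kj) = τ_ij/(τ_ik τ_kj), and consequently τ_ij = τ_ik · τ_kj. -/

import Mathlib

/-- If β_ij = 0 then γ_ij/(γ_ik γ_kj) = τ_ij/(τ_ik τ_kj), hence τ_ij = τ_ik τ_kj. -/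
theorem stmt10 {K : Type*} [Field K]
    (ajS ajT bijS bijT bkjS bkjT bikS bikT : K)
    (cijS cijT cjiS cjiT cikS cikT ckiS ckiT ckjS ckjT cjkS cjkT : K)
    (hajS : ajS ≠ 0) (hajT : ajT ≠ 0)
    (hbijS : bijS ≠ 0) (hbijT : bijT ≠ 0) (hbkjS : bkjS ≠ 0) (hbkjT : bkjT ≠ 0)
    (hbikS : bikS ≠ 0) (hbikT : bikT ≠ 0)
    (hcijS : cijS ≠ 0) (hcijT : cijT ≠ 0) (hcjiS : cjiS ≠ 0) (hcjiT : cjiT ≠ 0)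
    (hcikS : cikS ≠ 0) (hcikT : cikT ≠ 0) (hckiS : ckiS ≠ 0) (hckiT : ckiT ≠ 0)
    (hckjS : ckjS ≠ 0) (hckjT : ckjT ≠ 0) (hcjkS : cjkS ≠ 0) (hcjkT : cjkT ≠ 0)
    (βij γij γik γkj τij τik τki τkj : K)
    (hβij : βij = (ajT * bijS - ajS * bijT) / (cijS * cjiT))
    (hγij : γij = bijT * cjiS / (bijS * cjiT))
    (hγik : γik = bikT * ckiS / (bikS * ckiT))
    (hγkj : γkj = bkjT * cjkS / (bkjS * cjkT))
    (hτij : τij = cijT * cjiS / (cijS * cjiT))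
    (hτik : τik = cikT * ckiS / (cikS * ckiT))
    (hτki : τki = ckiT * cikS / (ckiS * cikT))
    (hτkj : τkj = ckjT * cjkS / (ckjS * cjkT))
    (hcond1 : βij = (γij / γik - γkj) * (bijS * cjkT / (cikS * cjiT)))
    (hcond2 : βij = (τik * (γij / γik) - γkj * (τij / τkj)) *
      (bijS * ckjT / (ckiS * cijT)))
    (hβ0 : βij = 0) :
    γij / (γik * γkj) = τij / (τik * τkj) ∧ τij = τik * τkj := by
  have hγik : γik ≠ 0 := by
    rw [hγik]; exact div_ne_zero (mul_ne_zero hbikT hckiS) (mul_ne_zero hbikS hckiT)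
  have hγkj : γkj ≠ 0 := by
    rw [hγkj]; exact div_ne_zero (mul_ne_zero hbkjT hcjkS) (mul_ne_zero hbkjS hcjkT)
  have hτik : τik ≠ 0 := by
    rw [hτik]; exact div_ne_zero (mul_ne_zero hcikT hckiS) (mul_ne_zero hcikS hckiT)
  have hτkj : τkj ≠ 0 := by
    rw [hτkj]; exact div_ne_zero (mul_ne_zero hckjT hcjkS) (mul_ne_zero hckjS hcjkT)
  have hf1 : bijS * cjkT / (cikS * cjiT) ≠ 0 :=
    div_ne_zero (mul_ne_zero hbijS hcjkT) (mul_ne_zero hcikS hcjiT)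
  have hf2 : bijS * ckjT / (ckiS * cijT) ≠ 0 :=
    div_ne_zero (mul_ne_zero hbijS hckjT) (mul_ne_zero hckiS hcijT)
  rw [hβ0] at hcond1 hcond2
  have h1 : γij / γik = γkj :=
    sub_eq_zero.mp ((mul_eq_zero.mp hcond1.symm).resolve_right hf1)
  have h2 : τik * (γij / γik) = γkj * (τij / τkj) :=
    sub_eq_zero.mp ((mul_eq_zero.mp hcond2.symm).resolve_right hf2)
  rw [h1] at h2
  have hτ : τij = τik * τkj := by
    field_simp at h2
    exact (mul_left_cancel₀ hγkj (by linear_combination γkj * h2 :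
      γkj * (τik * τkj) = γkj * τij)).symm
  refine ⟨?_, hτ⟩
  rw [hτ, div_mul_eq_div_div, h1, div_self hγkj, div_self (mul_ne_zero hτik hτkj)]
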